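/- The regularization max_ε (defined piecewise: 0 for x ≤ 0, -(1/(2ε³))x⁴ + (1/ε²)x³ for 0 < x < ε, x - ε/2 for x ≥ ε) satisfies 0 ≤ max_ε'(x) ≤ 3/2 for all x ∈ ℝ. -/

import Mathlib

noncomputable def maxe (ε : ℝ) (x : ℝ) : ℝ :=
  if x ≤ 0 then 0
  else if x < ε then -(1 / (2 * ε ^ 3)) * x ^ 4 + (1 / ε ^ 2) * x ^ 3
  else x - ε / 2

lemma p_hasDerivAt (ε : ℝ) (hε : 0 < ε) (y : ℝ) :
    HasDerivAt (fun y : ℝ => -(1 / (2 * ε ^ 3)) * y ^ 4 + (1 / ε ^ 2) * y ^ 3)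
      (-(2 / ε ^ 3) * y ^ 3 + (3 / ε ^ 2) * y ^ 2) y := by
  have hne : ε ≠ 0 := ne_of_gt hε
  have h := ((hasDerivAt_pow 4 y).const_mul (-(1 / (2 * ε ^ 3)))).add
    ((hasDerivAt_pow 3 y).const_mul (1 / ε ^ 2))
  refine HasDerivAt.congr_deriv h ?_
  field_simp
  ring

lemma maxe_hasDerivAt (ε : ℝ) (hε : 0 < ε) (x : ℝ) :
    HasDerivAt (maxe ε)
      (if x ≤ 0 then 0 else if x < ε then -(2 / ε ^ 3) * x ^ 3 + (3 / ε ^ 2) * x ^ 2 else 1) x := by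
  have hne : ε ≠ 0 := ne_of_gt hε
  rcases lt_trichotomy x 0 with hx | hx | hx
  · rw [if_pos hx.le]
    have : (fun y : ℝ => (0 : ℝ)) =ᶠ[nhds x] maxe ε := by
      filter_upwards [Iio_mem_nhds hx] with y hy
      simp [maxe, le_of_lt (Set.mem_Iio.mp hy)]
    exact (hasDerivAt_const x 0).congr_of_eventuallyEq this.symm
  · subst hx
    rw [if_pos le_rfl]
    have h1 : HasDerivWithinAt (maxe ε) 0 (Set.Iic 0) 0 := by
      refine (hasDerivWithinAt_const 0 (Set.Iic 0) (0 : ℝ)).congr ?_ ?_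
      · intro y hy; simp [maxe, Set.mem_Iic.mp hy]
      · simp [maxe]
    have h2 : HasDerivWithinAt (maxe ε) 0 (Set.Ici 0) 0 := by
      have hp := (p_hasDerivAt ε hε 0).hasDerivWithinAt (s := Set.Ici 0)
      have hval : -(2 / ε ^ 3) * (0:ℝ) ^ 3 + (3 / ε ^ 2) * (0:ℝ) ^ 2 = 0 := by ring
      rw [hval] at hp
      refine hp.congr_of_eventuallyEq ?_ (by simp [maxe])
      have hmem : Set.Iio ε ∈ nhdsWithin (0:ℝ) (Set.Ici 0) :=
        mem_nhdsWithin_of_mem_nhds (Iio_mem_nhds hε)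
      filter_upwards [hmem, self_mem_nhdsWithin] with y hylt hy0
      rcases eq_or_lt_of_le (Set.mem_Ici.mp hy0) with h0 | h0
      · simp [maxe, ← h0]
      · simp [maxe, not_le.mpr h0, Set.mem_Iio.mp hylt]
    have := h1.union h2
    rw [Set.Iic_union_Ici] at this
    exact hasDerivWithinAt_univ.mp this
  · rcases lt_trichotomy x ε with hxe | hxe | hxe
    · rw [if_neg (not_le.mpr hx), if_pos hxe]
      have : (fun y : ℝ => -(1 / (2 * ε ^ 3)) * y ^ 4 + (1 / ε ^ 2) * y ^ 3)
          =ᶠ[nhds x] maxe ε := by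
        filter_upwards [Ioo_mem_nhds hx hxe] with y hy
        simp [maxe, not_le.mpr hy.1, hy.2]
      exact (p_hasDerivAt ε hε x).congr_of_eventuallyEq this.symm
    · subst hxe
      rw [if_neg (not_le.mpr hx), if_neg (lt_irrefl x)]
      have h1 : HasDerivWithinAt (maxe x) 1 (Set.Iic x) x := by
        have hp := (p_hasDerivAt x hx x).hasDerivWithinAt (s := Set.Iic x)
        have hval : -(2 / x ^ 3) * x ^ 3 + (3 / x ^ 2) * x ^ 2 = 1 := by
          field_simp
          ring
        rw [hval] at hp
        refine hp.congr_of_eventuallyEq ?_ ?_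
        · have hmem : Set.Ioi (0:ℝ) ∈ nhdsWithin x (Set.Iic x) :=
            mem_nhdsWithin_of_mem_nhds (Ioi_mem_nhds hx)
          filter_upwards [hmem, self_mem_nhdsWithin] with y hy0 hyx
          rcases eq_or_lt_of_le (Set.mem_Iic.mp hyx) with h0 | h0
          · subst h0
            simp [maxe, not_le.mpr hx, lt_irrefl]
            field_simp
            ring
          · simp [maxe, not_le.mpr (Set.mem_Ioi.mp hy0), h0]
        · simp [maxe, not_le.mpr hx, lt_irrefl]
          field_simp
          ring
      have h2 : HasDerivWithinAt (maxe x) 1 (Set.Ici x) x := by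
        have hid : HasDerivWithinAt (fun y : ℝ => y - x / 2) 1 (Set.Ici x) x :=
          ((hasDerivAt_id x).sub_const (x / 2)).hasDerivWithinAt
        refine hid.congr ?_ ?_
        · intro y hy
          have hyx : x ≤ y := Set.mem_Ici.mp hy
          simp [maxe, not_le.mpr (lt_of_lt_of_le hx hyx), not_lt.mpr hyx]
        · simp [maxe, not_le.mpr hx, lt_irrefl]
      have := h1.union h2
      rw [Set.Iic_union_Ici] at this
      exact hasDerivWithinAt_univ.mp this
    · rw [if_neg (not_le.mpr hx), if_neg (not_lt.mpr hxe.le)]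
      have : (fun y : ℝ => y - ε / 2) =ᶠ[nhds x] maxe ε := by
        filter_upwards [Ioi_mem_nhds hxe] with y hy
        have hyε : ε < y := Set.mem_Ioi.mp hy
        simp [maxe, not_le.mpr (lt_trans hε hyε), not_lt.mpr hyε.le]
      exact (((hasDerivAt_id x).sub_const (ε / 2)).congr_of_eventuallyEq this.symm)

theorem maxe_deriv_bounds (ε : ℝ) (hε : 0 < ε) (x : ℝ) :
    0 ≤ deriv (maxe ε) x ∧ deriv (maxe ε) x ≤ 3 / 2 := by
  have h := (maxe_hasDerivAt ε hε x).deriv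
  rw [h]
  have hne : ε ≠ 0 := ne_of_gt hε
  by_cases h0 : x ≤ 0
  · rw [if_pos h0]; norm_num
  · rw [if_neg h0]
    by_cases h1 : x < ε
    · rw [if_pos h1]
      push_neg at h0
      have h3 : (0:ℝ) < ε ^ 3 := by positivity
      have key : -(2 / ε ^ 3) * x ^ 3 + (3 / ε ^ 2) * x ^ 2
          = x ^ 2 * (3 * ε - 2 * x) / ε ^ 3 := by
        field_simp
        ring
      rw [key]
      constructor
      · apply div_nonneg _ h3.le
        have : 0 < 3 * ε - 2 * x := by linarith
        positivity
      · rw [div_le_iff₀ h3]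
        nlinarith [mul_nonneg (sq_nonneg (ε - x)) (by linarith : (0:ℝ) ≤ ε + 2 * x)]
    · rw [if_neg h1]
      norm_num
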